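/- Let S := {(x,y,z) ∈ ℝ³ : x ≥ 0 and −x² + y² + 4|z| ≤ 0}, let T > 0, and let γ = (γ₁,γ₂,γ₃) : [0,T] → ℝ³ be a curve such that (−γ(s))∗γ(t) ∈ S for all 0 ≤ s < t ≤ T, where ∗ is the Heisenberg group law and −p denotes the group inverse of p. If γ is differentiable at a point s ∈ [0,T), then γ₃'(s) = (γ₁(s)γ₂'(s) − γ₂(s)γ₁'(s))/2, γ₂'(s)² ≤ γ₁'(s)², and γ₁'(s) ≥ 0; that is, γ'(s) is either zero or a horizontal future-directed causal vector. -/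

import Mathlib

open Set
open Filter Topology

/-- The Heisenberg group law on `ℝ³`. -/
noncomputable def heisMul (p q : ℝ × ℝ × ℝ) : ℝ × ℝ × ℝ :=
  (p.1 + q.1, p.2.1 + q.2.1, p.2.2 + q.2.2 + (p.1 * q.2.1 - q.1 * p.2.1) / 2)

/-- The Heisenberg group inverse. -/
def heisInv (p : ℝ × ℝ × ℝ) : ℝ × ℝ × ℝ :=
  (-p.1, -p.2.1, -p.2.2)

/-- The causal future of the origin: `{(x,y,z) : x ≥ 0 and −x² + y² + 4|z| ≤ 0}`. -/
def causalFutureSet : Set (ℝ × ℝ × ℝ) :=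
  {p | 0 ≤ p.1 ∧ -p.1^2 + p.2.1^2 + 4 * |p.2.2| ≤ 0}

/-- if `γ : [0,T] → ℝ³` is causal in the synthetic sense, i.e.
`(−γ(s))∗γ(t)` lies in the causal future of the origin whenever `0 ≤ s < t ≤ T`,
then at every point `s ∈ [0,T)` of differentiability the velocity `d = γ'(s)`
satisfies the horizontality condition `d₃ = (γ₁(s)d₂ − γ₂(s)d₁)/2` and the
causality conditions `d₂² ≤ d₁²` and `d₁ ≥ 0`; that is, `γ'(s)` is either zero or
a horizontal future-directed causal vector. -/
theorem synthetic_causal_has_causal_velocity (T : ℝ) (hT : 0 < T)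
    (γ : ℝ → ℝ × ℝ × ℝ)
    (hγ : ∀ s t : ℝ, 0 ≤ s → s < t → t ≤ T →
      heisMul (heisInv (γ s)) (γ t) ∈ causalFutureSet)
    (s : ℝ) (hs : s ∈ Ico 0 T) (d : ℝ × ℝ × ℝ) (hd : HasDerivAt γ d s) :
    d.2.2 = ((γ s).1 * d.2.1 - (γ s).2.1 * d.1) / 2 ∧
    d.2.1^2 ≤ d.1^2 ∧ 0 ≤ d.1 := by
  obtain ⟨hs0, hsT⟩ := hs
  set a := (γ s).1 with ha
  set b := (γ s).2.1 with hb
  set c := (γ s).2.2 with hc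
  have hslope : Filter.Tendsto (slope γ s) (𝓝[>] s) (𝓝 d) :=
    (hasDerivAt_iff_tendsto_slope.1 hd).mono_left
      (nhdsWithin_mono _ (fun x hx => ne_of_gt hx))
  set q1 : ℝ → ℝ := fun t => (t - s)⁻¹ * ((γ t).1 - a) with hq1def
  set q2 : ℝ → ℝ := fun t => (t - s)⁻¹ * ((γ t).2.1 - b) with hq2def
  set q3 : ℝ → ℝ := fun t => (t - s)⁻¹ * ((γ t).2.2 - c) with hq3def
  have hq1 : Filter.Tendsto q1 (𝓝[>] s) (𝓝 d.1) := by
    have := (continuous_fst.tendsto d).comp hslope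
    convert this using 1
    funext t; rfl
  have hq2 : Filter.Tendsto q2 (𝓝[>] s) (𝓝 d.2.1) := by
    have := ((continuous_fst.comp continuous_snd).tendsto d).comp hslope
    convert this using 1
    all_goals rfl
  have hq3 : Filter.Tendsto q3 (𝓝[>] s) (𝓝 d.2.2) := by
    have := ((continuous_snd.comp continuous_snd).tendsto d).comp hslope
    convert this using 1
    all_goals rfl
  have hmem : ∀ᶠ t in 𝓝[>] s, t ∈ Ioo s T :=
    Ioo_mem_nhdsGT_of_mem ⟨le_refl s, hsT⟩
  have key : ∀ t ∈ Ioo s T,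
      0 ≤ (γ t).1 - a ∧
      -((γ t).1 - a)^2 + ((γ t).2.1 - b)^2
        + 4 * |(γ t).2.2 - c + (b * (γ t).1 - a * (γ t).2.1) / 2| ≤ 0 := by
    intro t ht
    obtain ⟨H1, H2⟩ := hγ s t hs0 ht.1 ht.2.le
    have H1' : (0:ℝ) ≤ -(γ s).1 + (γ t).1 := H1
    have H2' : -(-(γ s).1 + (γ t).1)^2 + (-(γ s).2.1 + (γ t).2.1)^2
        + 4 * |-(γ s).2.2 + (γ t).2.2
          + (-(γ s).1 * (γ t).2.1 - (γ t).1 * -(γ s).2.1) / 2| ≤ 0 := H2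
    have eabs : |-(γ s).2.2 + (γ t).2.2
          + (-(γ s).1 * (γ t).2.1 - (γ t).1 * -(γ s).2.1) / 2|
        = |(γ t).2.2 - c + (b * (γ t).1 - a * (γ t).2.1) / 2| :=
      congrArg abs (by rw [ha, hb, hc]; ring)
    rw [eabs] at H2'
    have e1 : ((γ t).1 - a)^2 = (-(γ s).1 + (γ t).1)^2 := by rw [ha]; ring
    have e2 : ((γ t).2.1 - b)^2 = (-(γ s).2.1 + (γ t).2.1)^2 := by rw [hb]; ring
    constructor
    · rw [ha]; linarith
    · linarith [H2', e1, e2]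
  have hpos : ∀ᶠ t in 𝓝[>] s, 0 < t - s := by
    filter_upwards [self_mem_nhdsWithin] with t ht
    exact sub_pos.2 ht
  have hd1 : 0 ≤ d.1 := by
    refine ge_of_tendsto hq1 ?_
    filter_upwards [hmem, hpos] with t ht htp
    exact mul_nonneg (inv_nonneg.2 htp.le) (key t ht).1
  have hd2 : d.2.1 ^ 2 ≤ d.1 ^ 2 := by
    refine le_of_tendsto_of_tendsto (hq2.pow 2) (hq1.pow 2) ?_
    filter_upwards [hmem] with t ht
    obtain ⟨h1, h2⟩ := key t ht
    have habs := abs_nonneg ((γ t).2.2 - c + (b * (γ t).1 - a * (γ t).2.1) / 2)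
    have hX : ((γ t).2.1 - b)^2 ≤ ((γ t).1 - a)^2 := by linarith
    have e2 : q2 t ^ 2 = ((t - s)⁻¹)^2 * ((γ t).2.1 - b)^2 := by
      simp only [hq2def]; rw [mul_pow]
    have e1 : q1 t ^ 2 = ((t - s)⁻¹)^2 * ((γ t).1 - a)^2 := by
      simp only [hq1def]; rw [mul_pow]
    rw [e1, e2]
    exact mul_le_mul_of_nonneg_left hX (sq_nonneg _)
  refine ⟨?_, hd2, hd1⟩
  set r : ℝ → ℝ := fun t =>
    (t - s)⁻¹ * ((γ t).2.2 - c + (b * (γ t).1 - a * (γ t).2.1) / 2) with hrdef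
  have hr_eq : ∀ t, r t = q3 t + (b * q1 t - a * q2 t) / 2 := by
    intro t
    simp only [hrdef, hq1def, hq2def, hq3def]
    ring
  have hrlim : Filter.Tendsto r (𝓝[>] s)
      (𝓝 (d.2.2 + (b * d.1 - a * d.2.1) / 2)) := by
    have : Filter.Tendsto (fun t => q3 t + (b * q1 t - a * q2 t) / 2) (𝓝[>] s)
        (𝓝 (d.2.2 + (b * d.1 - a * d.2.1) / 2)) :=
      hq3.add (((hq1.const_mul b).sub (hq2.const_mul a)).div_const 2)
    exact this.congr (fun t => (hr_eq t).symm)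
  have hbound : ∀ᶠ t in 𝓝[>] s, ‖r t‖ ≤ (t - s) * q1 t ^ 2 / 4 := by
    filter_upwards [hmem, hpos] with t ht htp
    have hne : t - s ≠ 0 := htp.ne'
    obtain ⟨h1, h2⟩ := key t ht
    have hsq := sq_nonneg ((γ t).2.1 - b)
    have habs : |(γ t).2.2 - c + (b * (γ t).1 - a * (γ t).2.1) / 2|
        ≤ ((γ t).1 - a)^2 / 4 := by linarith
    have h1' : (γ t).1 - a = (t - s) * q1 t := by
      simp only [hq1def]
      field_simp
    rw [Real.norm_eq_abs, hrdef]
    rw [abs_mul, abs_of_pos (inv_pos.2 htp)]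
    calc (t - s)⁻¹ * |(γ t).2.2 - c + (b * (γ t).1 - a * (γ t).2.1) / 2|
        ≤ (t - s)⁻¹ * (((γ t).1 - a)^2 / 4) :=
          mul_le_mul_of_nonneg_left habs (inv_pos.2 htp).le
      _ = (t - s) * q1 t ^ 2 / 4 := by
          rw [h1', mul_pow]
          field_simp
  have hzero : Filter.Tendsto (fun t => (t - s) * q1 t ^ 2 / 4) (𝓝[>] s) (𝓝 0) := by
    have h0 : Filter.Tendsto (fun t : ℝ => t - s) (𝓝[>] s) (𝓝 0) := by
      have : Filter.Tendsto (fun t : ℝ => t - s) (𝓝 s) (𝓝 (s - s)) :=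
        (continuous_id.sub continuous_const).tendsto s
      rw [sub_self] at this
      exact this.mono_left nhdsWithin_le_nhds
    have := (h0.mul (hq1.pow 2)).div_const 4
    simpa using this
  have hrzero : Filter.Tendsto r (𝓝[>] s) (𝓝 0) :=
    squeeze_zero_norm' hbound hzero
  have huniq := tendsto_nhds_unique hrlim hrzero
  linarith
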